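/- Let E_{n,fix} denote the set of elements of E_n fixing at least one leaf of T_n, and set x_n = |E_{n,fix}|/|E_n|. Then for all n ≥ 1, ρ(x_n) ≤ x_{n+1} ≤ φ(x_n), where ρ(t) = t − t²/2 and φ(t) = t − t²/2 + t³/3. Consequently x_n = (2/n)(1 + O(log n/n)) as n → ∞; in particular, the proportion of elements of E_n fixing a leaf of T_n tends to 0 as n → ∞. -/

import Mathlib

open Equiv

/-- Leaves of the regular ternary rooted tree of height `n`. -/
def L : ℕ → Type
  | 0 => PUnit
  | n+1 => Fin 3 × L n

instance Ldec : ∀ n, DecidableEq (L n)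
  | 0 => inferInstanceAs (DecidableEq PUnit)
  | n+1 => letI := Ldec n; inferInstanceAs (DecidableEq (Fin 3 × L n))

instance Lfin : ∀ n, Fintype (L n)
  | 0 => inferInstanceAs (Fintype PUnit)
  | n+1 => letI := Lfin n; inferInstanceAs (Fintype (Fin 3 × L n))

/-- The wreath-product construction `G ≀ S_3` (as a type). -/
def W (G : Type) : Type := (Fin 3 → G) × Equiv.Perm (Fin 3)

instance Wgroup (G : Type) [Group G] : Group (W G) where
  mul x y := (fun i => x.1 (y.2 i) * y.1 i, x.2 * y.2)
  one := (fun _ => 1, 1)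
  inv x := (fun i => (x.1 (x.2⁻¹ i))⁻¹, x.2⁻¹)
  mul_assoc x y z := Prod.ext (funext fun i => mul_assoc _ _ _) (mul_assoc _ _ _)
  one_mul x := Prod.ext (funext fun i => one_mul _) (one_mul _)
  mul_one x := Prod.ext (funext fun i => mul_one _) (mul_one _)
  inv_mul_cancel x := Prod.ext (funext fun i => by
      show (x.1 (x.2⁻¹ (x.2 i)))⁻¹ * x.1 i = 1
      rw [show x.2⁻¹ (x.2 i) = i from x.2.symm_apply_apply i, inv_mul_cancel]) (inv_mul_cancel _)

/-- `A n` is the automorphism group of the ternary rooted tree of height `n`,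
realized as the `n`-fold iterated wreath product of `S_3 = Aut(T_1)`. -/
def A : ℕ → Type
  | 0 => PUnit
  | n+1 => W (A n)

instance Agroup : ∀ n, Group (A n)
  | 0 => inferInstanceAs (Group PUnit)
  | n+1 => @Wgroup (A n) (Agroup n)

/-- The faithful action of `A n` on the `3^n` leaves of the tree. -/
def toPerm : ∀ n, A n →* Equiv.Perm (L n)
  | 0 => 1
  | n+1 =>
    { toFun := fun x : W (A n) => Equiv.prodShear x.2 (fun i => toPerm n (x.1 i))
      map_one' := by
        apply Equiv.ext
        intro l
        show ((1 : Equiv.Perm (Fin 3)) l.1, toPerm n (1 : A n) l.2) = l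
        rw [map_one]
        exact Prod.ext rfl rfl
      map_mul' := by
        intro x y
        apply Equiv.ext
        intro l
        show ((x * y).2 l.1, toPerm n ((x * y).1 l.1) l.2)
          = (x.2 (y.2 l.1), toPerm n (x.1 (y.2 l.1)) ((toPerm n (y.1 l.1)) l.2))
        refine Prod.ext rfl ?_
        show toPerm n (x.1 (y.2 l.1) * y.1 l.1) l.2 = _
        rw [map_mul]
        rfl }

/-- Restriction `Aut(T_{n+1}) → Aut(T_n)` to the subtree spanned by the first `n` levels. -/
def res : ∀ n, A (n+1) →* A n
  | 0 => 1
  | n+1 =>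
    { toFun := fun x : W (A (n+1)) => ((fun i => res n (x.1 i), x.2) : W (A n))
      map_one' := Prod.ext (funext fun _ => map_one (res n)) rfl
      map_mul' := fun x y => Prod.ext (funext fun i => map_mul (res n) _ _) rfl }

/-- Restriction `Aut(T_{n+2}) → Aut(T_2)`. -/
def resTo2 : ∀ n, A (n+2) →* A 2
  | 0 => MonoidHom.id _
  | n+1 => (resTo2 n).comp (res (n+2))

/-- `sgn_2` : the sign of the permutation induced on the 9 leaves of `T_2`. -/
def sgn2 (n : ℕ) : A (n+2) →* ℤˣ :=
  Equiv.Perm.sign.comp ((toPerm 2).comp (resTo2 n))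

/-- Given a subgroup `H ≤ Aut(T_n)`, the subgroup of `Aut(T_{n+1})` consisting of elements
all of whose three level-1 components lie in `H` (the base of the wreath product `H ≀ S_3`). -/
def lift1 {n : ℕ} (Hn : Subgroup (A n)) : Subgroup (A (n+1)) where
  carrier := {x : W (A n) | ∀ i, x.1 i ∈ Hn}
  one_mem' := fun _ => Hn.one_mem
  mul_mem' := fun {x y} hx hy i => Hn.mul_mem (hx _) (hy _)
  inv_mem' := fun {x} hx i => Hn.inv_mem (hx _)

/-- The groups `E_n`: `E_1 = Aut(T_1)` and `E_n = (E_{n-1} ≀ Aut(T_1)) ∩ ker sgn_2`. -/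
def E : ∀ n, Subgroup (A n)
  | 0 => ⊤
  | 1 => ⊤
  | n+2 => lift1 (E (n+1)) ⊓ (sgn2 n).ker

/-- The projection onto the top (level-1) symmetric group component. -/
def sndHom (n : ℕ) : A (n+1) →* Equiv.Perm (Fin 3) where
  toFun := fun x : W (A n) => x.2
  map_one' := rfl
  map_mul' := fun _ _ => rfl

/-- The cyclic subgroup `C_3 ≤ S_3`. -/
def C3 : Subgroup (Equiv.Perm (Fin 3)) := Subgroup.zpowers (finRotate 3)

/-- The groups `H_n = [C_3]^n`, the iterated wreath product of cyclic groups of order 3. -/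
def Hgp : ∀ n, Subgroup (A n)
  | 0 => ⊤
  | n+1 => lift1 (Hgp n) ⊓ C3.comap (sndHom n)

/-- The elements `ν_n`: `ν_1 = (12)`, `ν_n = ((ν_{n-1},1,1),1)`. -/
def ν : ∀ n, A n
  | 0 => 1
  | 1 => ((fun _ => (1 : A 0), Equiv.swap 0 1) : W (A 0))
  | n+2 => ((fun i => if i = 0 then ν (n+1) else 1, 1) : W (A (n+1)))

/-- The elements `τ_n`: `τ_1 = (12)`, `τ_n = ((τ_{n-1},1,1),(12))`. -/
def τ : ∀ n, A n
  | 0 => 1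
  | 1 => ((fun _ => (1 : A 0), Equiv.swap 0 1) : W (A 0))
  | n+2 => ((fun i => if i = 0 then τ (n+1) else 1, Equiv.swap 0 1) : W (A (n+1)))

/-- Truncation of a leaf of `T_n` to the vertex at level `m` below it. -/
def take : ∀ (n m : ℕ), L n → L m
  | _, 0, _ => PUnit.unit
  | 0, m+1, _ => ((0, take 0 m PUnit.unit) : Fin 3 × L m)
  | n+1, m+1, l => ((l.1, take n m l.2) : Fin 3 × L m)

/-- The proportion `x_n = |E_{n,fix}|/|E_n|` of elements of `E_n` fixing at least one
leaf of `T_n`. -/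
noncomputable def xprop (n : ℕ) : ℝ :=
  (Nat.card {s : A n // s ∈ E n ∧ ∃ l : L n, toPerm n s l = l} : ℝ) / (Nat.card (E n) : ℝ)



open Finset Equiv

instance Adec : ∀ n, DecidableEq (A n)
  | 0 => inferInstanceAs (DecidableEq PUnit)
  | n+1 => letI := Adec n; inferInstanceAs (DecidableEq ((Fin 3 → A n) × Equiv.Perm (Fin 3)))

instance Afin : ∀ n, Fintype (A n)
  | 0 => inferInstanceAs (Fintype PUnit)
  | n+1 => letI := Afin n; letI := Adec n; inferInstanceAs (Fintype ((Fin 3 → A n) × Equiv.Perm (Fin 3)))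

def fixes (n : ℕ) (x : A n) : Prop := ∃ l : L n, toPerm n x l = l

instance (n : ℕ) (x : A n) : Decidable (fixes n x) := by
  unfold fixes; infer_instance

lemma mem_E_ss (n : ℕ) (x : A (n+2)) :
    x ∈ E (n+2) ↔ (∀ i, (x : W (A (n+1))).1 i ∈ E (n+1)) ∧ sgn2 n x = 1 := by
  show x ∈ lift1 (E (n+1)) ⊓ (sgn2 n).ker ↔ _
  rw [Subgroup.mem_inf, MonoidHom.mem_ker]
  rfl

instance Emem : ∀ n, DecidablePred (· ∈ E n)
  | 0 => fun x => Decidable.isTrue (Subgroup.mem_top x)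
  | 1 => fun x => Decidable.isTrue (Subgroup.mem_top x)
  | n+2 => fun x =>
      letI := Emem (n+1)
      decidable_of_iff _ (mem_E_ss n x).symm

-- test base-level computations
example : (univ.filter (fun x : A 1 => x ∈ E 1 ∧ fixes 1 x ∧ Equiv.Perm.sign (sndHom 0 x) = 1)).card = 1 := by decide
example : (univ.filter (fun x : A 1 => x ∈ E 1 ∧ fixes 1 x ∧ Equiv.Perm.sign (sndHom 0 x) = -1)).card = 3 := by decide
example : (univ.filter (fun x : A 1 => x ∈ E 1 ∧ ¬fixes 1 x ∧ Equiv.Perm.sign (sndHom 0 x) = 1)).card = 2 := by decide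
example : (univ.filter (fun x : A 1 => x ∈ E 1 ∧ ¬fixes 1 x ∧ Equiv.Perm.sign (sndHom 0 x) = -1)).card = 0 := by decide
lemma units_pow_three (u : ℤˣ) : u ^ 3 = u := by
  rw [pow_succ, Int.units_sq, one_mul]

lemma sign_prodShear {α β : Type*} [DecidableEq α] [DecidableEq β] [Fintype α] [Fintype β]
    (σ : Equiv.Perm α) (F : α → Equiv.Perm β) :
    Equiv.Perm.sign (Equiv.prodShear σ F) =
      Equiv.Perm.sign σ ^ (Fintype.card β) * ∏ a, Equiv.Perm.sign (F a) := by
  have h : Equiv.prodShear σ F =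
      (Equiv.prodCongrRight F).trans (Equiv.prodCongr σ (Equiv.refl β)) := by
    apply Equiv.ext; rintro ⟨a, b⟩; rfl
  have h2 : (Equiv.prodShear σ F : Equiv.Perm (α × β)) =
      (Equiv.prodCongr σ (Equiv.refl β) : Equiv.Perm (α × β)) * Equiv.prodCongrRight F := h
  rw [h2, map_mul, Equiv.prodCongr_refl_right, Equiv.Perm.sign_prodCongrLeft,
    Equiv.Perm.sign_prodCongrRight, Finset.prod_const, Finset.card_univ, mul_comm]

lemma sign_toPerm1 (g : A 1) :
    Equiv.Perm.sign (toPerm 1 g) = Equiv.Perm.sign (sndHom 0 g) := by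
  show Equiv.Perm.sign (Equiv.prodShear (g : W (A 0)).2 fun i => toPerm 0 ((g : W (A 0)).1 i)) = _
  rw [sign_prodShear]
  have h0 : ∀ i : Fin 3, toPerm 0 ((g : W (A 0)).1 i) = 1 := fun i => rfl
  simp only [h0]
  have : Fintype.card (L 0) = 1 := rfl
  simp [this]
  rfl

lemma sgn2_eq : ∀ (n : ℕ) (x : A (n+2)), sgn2 n x =
    Equiv.Perm.sign (sndHom (n+1) x) *
      ∏ i, Equiv.Perm.sign (sndHom n ((x : W (A (n+1))).1 i))
  | 0, x => by
    show Equiv.Perm.sign (toPerm 2 x) = _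
    show Equiv.Perm.sign (Equiv.prodShear (x : W (A 1)).2 fun i => toPerm 1 ((x : W (A 1)).1 i)) = _
    rw [sign_prodShear]
    have : Fintype.card (L 1) = 3 := rfl
    rw [this, units_pow_three]
    congr 1
    exact Finset.prod_congr rfl fun i _ => sign_toPerm1 _
  | n+1, x => by
    have : sgn2 (n+1) x = sgn2 n (res (n+2) x) := rfl
    rw [this, sgn2_eq n]
    rfl
/- ## Counts at each level -/

def aC (k : ℕ) : ℕ := (Finset.univ.filter fun x : A (k+1) =>
  x ∈ E (k+1) ∧ fixes (k+1) x ∧ Equiv.Perm.sign (sndHom k x) = 1).card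
def bC (k : ℕ) : ℕ := (Finset.univ.filter fun x : A (k+1) =>
  x ∈ E (k+1) ∧ fixes (k+1) x ∧ Equiv.Perm.sign (sndHom k x) = -1).card
def cC (k : ℕ) : ℕ := (Finset.univ.filter fun x : A (k+1) =>
  x ∈ E (k+1) ∧ ¬fixes (k+1) x ∧ Equiv.Perm.sign (sndHom k x) = 1).card
def dC (k : ℕ) : ℕ := (Finset.univ.filter fun x : A (k+1) =>
  x ∈ E (k+1) ∧ ¬fixes (k+1) x ∧ Equiv.Perm.sign (sndHom k x) = -1).card
def pC (k : ℕ) : ℕ := (Finset.univ.filter fun x : A (k+1) =>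
  x ∈ E (k+1) ∧ Equiv.Perm.sign (sndHom k x) = 1).card
def mC (k : ℕ) : ℕ := (Finset.univ.filter fun x : A (k+1) =>
  x ∈ E (k+1) ∧ Equiv.Perm.sign (sndHom k x) = -1).card
def fC (k : ℕ) : ℕ := (Finset.univ.filter fun x : A (k+1) =>
  x ∈ E (k+1) ∧ fixes (k+1) x).card
def tC (k : ℕ) : ℕ := (Finset.univ.filter fun x : A (k+1) => x ∈ E (k+1)).card

/- ## Weights -/

def wt (k : ℕ) (x : A (k+1)) : ℤ := if x ∈ E (k+1) then 1 else 0
def we (k : ℕ) (x : A (k+1)) : ℤ :=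
  if x ∈ E (k+1) then ((Equiv.Perm.sign (sndHom k x) : ℤˣ) : ℤ) else 0
def wn (k : ℕ) (x : A (k+1)) : ℤ := if x ∈ E (k+1) ∧ ¬fixes (k+1) x then 1 else 0
def wne (k : ℕ) (x : A (k+1)) : ℤ :=
  if x ∈ E (k+1) ∧ ¬fixes (k+1) x then ((Equiv.Perm.sign (sndHom k x) : ℤˣ) : ℤ) else 0

def St (k : ℕ) : ℤ := ∑ x, wt k x
def Se (k : ℕ) : ℤ := ∑ x, we k x
def Sn (k : ℕ) : ℤ := ∑ x, wn k x
def Sne (k : ℕ) : ℤ := ∑ x, wne k x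


lemma sum_ind {X : Type} [Fintype X] (p : X → Prop) [DecidablePred p] :
    ∑ x, (if p x then (1:ℤ) else 0) = ((Finset.univ.filter p).card : ℤ) := by
  rw [Finset.sum_boole]

lemma card_split {X : Type} [Fintype X] (p q r : X → Prop)
    [DecidablePred p] [DecidablePred q] [DecidablePred r]
    (h : ∀ x, (if p x then (1:ℕ) else 0) = (if q x then 1 else 0) + (if r x then 1 else 0)) :
    (Finset.univ.filter p).card = (Finset.univ.filter q).card + (Finset.univ.filter r).card := by
  rw [Finset.card_filter, Finset.card_filter, Finset.card_filter, ← Finset.sum_add_distrib]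
  exact Finset.sum_congr rfl (fun x _ => h x)

lemma St_eq (k : ℕ) : St k = (aC k : ℤ) + bC k + cC k + dC k := by
  have h : St k = ∑ x : A (k+1),
      ((if x ∈ E (k+1) ∧ fixes (k+1) x ∧ Equiv.Perm.sign (sndHom k x) = 1 then (1:ℤ) else 0)
       + (if x ∈ E (k+1) ∧ fixes (k+1) x ∧ Equiv.Perm.sign (sndHom k x) = -1 then (1:ℤ) else 0)
       + (if x ∈ E (k+1) ∧ ¬fixes (k+1) x ∧ Equiv.Perm.sign (sndHom k x) = 1 then (1:ℤ) else 0)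
       + (if x ∈ E (k+1) ∧ ¬fixes (k+1) x ∧ Equiv.Perm.sign (sndHom k x) = -1 then (1:ℤ) else 0)) := by
    refine Finset.sum_congr rfl fun x _ => ?_
    rcases Int.units_eq_one_or (Equiv.Perm.sign (sndHom k x)) with hs | hs <;>
      by_cases hm : x ∈ E (k+1) <;> by_cases hf : fixes (k+1) x <;>
        simp [wt, hs, hm, hf]
  rw [h, Finset.sum_add_distrib, Finset.sum_add_distrib, Finset.sum_add_distrib,
    sum_ind, sum_ind, sum_ind, sum_ind]
  rfl

lemma Se_eq (k : ℕ) : Se k = ((aC k : ℤ) + cC k) - ((bC k : ℤ) + dC k) := by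
  have h : Se k = ∑ x : A (k+1),
      (((if x ∈ E (k+1) ∧ fixes (k+1) x ∧ Equiv.Perm.sign (sndHom k x) = 1 then (1:ℤ) else 0)
       + (if x ∈ E (k+1) ∧ ¬fixes (k+1) x ∧ Equiv.Perm.sign (sndHom k x) = 1 then (1:ℤ) else 0))
       - ((if x ∈ E (k+1) ∧ fixes (k+1) x ∧ Equiv.Perm.sign (sndHom k x) = -1 then (1:ℤ) else 0)
       + (if x ∈ E (k+1) ∧ ¬fixes (k+1) x ∧ Equiv.Perm.sign (sndHom k x) = -1 then (1:ℤ) else 0))) := by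
    refine Finset.sum_congr rfl fun x _ => ?_
    rcases Int.units_eq_one_or (Equiv.Perm.sign (sndHom k x)) with hs | hs <;>
      by_cases hm : x ∈ E (k+1) <;> by_cases hf : fixes (k+1) x <;>
        simp [we, hs, hm, hf]
  rw [h, Finset.sum_sub_distrib, Finset.sum_add_distrib, Finset.sum_add_distrib,
    sum_ind, sum_ind, sum_ind, sum_ind]
  show ((aC k : ℤ) + cC k) - ((bC k : ℤ) + dC k) = _
  ring

lemma Sn_eq (k : ℕ) : Sn k = (cC k : ℤ) + dC k := by
  have h : Sn k = ∑ x : A (k+1),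
      ((if x ∈ E (k+1) ∧ ¬fixes (k+1) x ∧ Equiv.Perm.sign (sndHom k x) = 1 then (1:ℤ) else 0)
       + (if x ∈ E (k+1) ∧ ¬fixes (k+1) x ∧ Equiv.Perm.sign (sndHom k x) = -1 then (1:ℤ) else 0)) := by
    refine Finset.sum_congr rfl fun x _ => ?_
    rcases Int.units_eq_one_or (Equiv.Perm.sign (sndHom k x)) with hs | hs <;>
      by_cases hm : x ∈ E (k+1) <;> by_cases hf : fixes (k+1) x <;>
        simp [wn, hs, hm, hf]
  rw [h, Finset.sum_add_distrib, sum_ind, sum_ind]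
  rfl

lemma Sne_eq (k : ℕ) : Sne k = (cC k : ℤ) - dC k := by
  have h : Sne k = ∑ x : A (k+1),
      ((if x ∈ E (k+1) ∧ ¬fixes (k+1) x ∧ Equiv.Perm.sign (sndHom k x) = 1 then (1:ℤ) else 0)
       - (if x ∈ E (k+1) ∧ ¬fixes (k+1) x ∧ Equiv.Perm.sign (sndHom k x) = -1 then (1:ℤ) else 0)) := by
    refine Finset.sum_congr rfl fun x _ => ?_
    rcases Int.units_eq_one_or (Equiv.Perm.sign (sndHom k x)) with hs | hs <;>
      by_cases hm : x ∈ E (k+1) <;> by_cases hf : fixes (k+1) x <;>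
        simp [wne, hs, hm, hf]
  rw [h, Finset.sum_sub_distrib, sum_ind, sum_ind]
  rfl

lemma pC_eq (k : ℕ) : pC k = aC k + cC k := by
  refine card_split _ _ _ fun x => ?_
  by_cases hm : x ∈ E (k+1) <;> by_cases hf : fixes (k+1) x <;>
    by_cases hs : Equiv.Perm.sign (sndHom k x) = 1 <;> simp [hm, hf, hs]

lemma mC_eq (k : ℕ) : mC k = bC k + dC k := by
  refine card_split _ _ _ fun x => ?_
  by_cases hm : x ∈ E (k+1) <;> by_cases hf : fixes (k+1) x <;>
    by_cases hs : Equiv.Perm.sign (sndHom k x) = -1 <;> simp [hm, hf, hs]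

lemma fC_eq (k : ℕ) : fC k = aC k + bC k := by
  refine card_split _ _ _ fun x => ?_
  rcases Int.units_eq_one_or (Equiv.Perm.sign (sndHom k x)) with hs | hs <;>
    by_cases hm : x ∈ E (k+1) <;> by_cases hf : fixes (k+1) x <;> simp [hm, hf, hs]

lemma tC_eq (k : ℕ) : tC k = pC k + mC k := by
  refine card_split _ _ _ fun x => ?_
  rcases Int.units_eq_one_or (Equiv.Perm.sign (sndHom k x)) with hs | hs <;>
    by_cases hm : x ∈ E (k+1) <;> simp [hm, hs]
lemma fixes_ss (n : ℕ) (x : A (n+1)) :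
    fixes (n+1) x ↔ ∃ i, (x : W (A n)).2 i = i ∧ fixes n ((x : W (A n)).1 i) := by
  constructor
  · rintro ⟨⟨i, l⟩, h⟩
    exact ⟨i, congrArg Prod.fst h, l, congrArg Prod.snd h⟩
  · rintro ⟨i, hi, l, hl⟩
    exact ⟨⟨i, l⟩, Prod.ext hi hl⟩

lemma mem_pair (k : ℕ) (g : Fin 3 → A (k+1)) (σ : Equiv.Perm (Fin 3)) :
    ((g, σ) : A (k+2)) ∈ E (k+2) ↔
      (∀ i, g i ∈ E (k+1)) ∧
        Equiv.Perm.sign σ * ∏ i, Equiv.Perm.sign (sndHom k (g i)) = 1 := by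
  exact (mem_E_ss k (g, σ)).trans
    (and_congr Iff.rfl (Eq.to_iff (congrArg (· = (1:ℤˣ)) (sgn2_eq k (g, σ)))))

lemma nofix_pair (k : ℕ) (g : Fin 3 → A (k+1)) (σ : Equiv.Perm (Fin 3)) :
    ¬fixes (k+2) ((g, σ) : A (k+2)) ↔ ∀ i, σ i = i → ¬fixes (k+1) (g i) := by
  exact (not_congr (fixes_ss (k+1) (g, σ))).trans (by push_neg; rfl)

lemma sndHom_pair (k : ℕ) (g : Fin 3 → A (k+1)) (σ : Equiv.Perm (Fin 3)) :
    sndHom (k+1) ((g, σ) : A (k+2)) = σ := rfl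

/-- Pointwise indicator decomposition. -/
lemma pointA (k : ℕ) (u : ℤˣ) (g : Fin 3 → A (k+1)) (P : Fin 3 → Prop) [DecidablePred P] :
    2 * (if ((∀ i, g i ∈ E (k+1)) ∧ (∀ i, P i → ¬fixes (k+1) (g i)) ∧
          u * ∏ i, Equiv.Perm.sign (sndHom k (g i)) = 1) then (1:ℤ) else 0)
    = ∏ i, (if P i then wn k (g i) else wt k (g i))
      + (u : ℤ) * ∏ i, (if P i then wne k (g i) else we k (g i)) := by
  by_cases hg : ∀ i, g i ∈ E (k+1) ∧ (P i → ¬fixes (k+1) (g i))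
  · have h1 : ∏ i, (if P i then wn k (g i) else wt k (g i)) = 1 := by
      refine Finset.prod_eq_one fun i _ => ?_
      by_cases hp : P i <;> simp [hp, wn, wt, (hg i).1, (hg i).2]
    have h2 : ∏ i, (if P i then wne k (g i) else we k (g i))
        = Units.coeHom ℤ (∏ i, Equiv.Perm.sign (sndHom k (g i))) := by
      rw [map_prod]
      refine Finset.prod_congr rfl fun i _ => ?_
      by_cases hp : P i <;> simp [hp, wne, we, (hg i).1, (hg i).2] <;> rfl
    have hcast : (u : ℤ) * Units.coeHom ℤ (∏ i, Equiv.Perm.sign (sndHom k (g i)))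
        = Units.coeHom ℤ (u * ∏ i, Equiv.Perm.sign (sndHom k (g i))) := by
      rw [map_mul]; rfl
    rw [h1, h2, hcast]
    rcases Int.units_eq_one_or (u * ∏ i, Equiv.Perm.sign (sndHom k (g i))) with hu | hu
    · rw [if_pos ⟨fun i => (hg i).1, fun i => (hg i).2, hu⟩, hu]; norm_num
    · rw [if_neg (by rintro ⟨-, -, h⟩; rw [h] at hu; exact absurd hu (by decide)), hu]
      norm_num
  · obtain ⟨i, hi⟩ := not_forall.mp hg
    have h1 : (if P i then wn k (g i) else wt k (g i)) = 0 := by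
      by_cases hp : P i
      · rw [if_pos hp, wn, if_neg]
        rintro ⟨hm, hf⟩; exact hi ⟨hm, fun _ => hf⟩
      · rw [if_neg hp, wt, if_neg]
        intro hm; exact hi ⟨hm, fun h => absurd h hp⟩
    have h2 : (if P i then wne k (g i) else we k (g i)) = 0 := by
      by_cases hp : P i
      · rw [if_pos hp, wne, if_neg]
        rintro ⟨hm, hf⟩; exact hi ⟨hm, fun _ => hf⟩
      · rw [if_neg hp, we, if_neg]
        intro hm; exact hi ⟨hm, fun h => absurd h hp⟩
    rw [Finset.prod_eq_zero (Finset.mem_univ i) h1,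
      Finset.prod_eq_zero (Finset.mem_univ i) h2]
    rw [if_neg (by rintro ⟨hm, hf, -⟩; exact hi ⟨hm i, fun hp => hf i hp⟩)]
    ring
def NFt (k : ℕ) (σ : Equiv.Perm (Fin 3)) : ℤ := ∏ i, (if σ i = i then Sn k else St k)
def NFe (k : ℕ) (σ : Equiv.Perm (Fin 3)) : ℤ := ∏ i, (if σ i = i then Sne k else Se k)

lemma sum_if_const {M : Type} [AddCommMonoid M] {X : Type} [Fintype X]
    (c : Prop) [Decidable c] (f : X → M) :
    ∑ x, (if c then f x else 0) = if c then ∑ x, f x else 0 := by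
  by_cases hc : c <;> simp [hc]

lemma sum_prod_eval (k : ℕ) (h : Fin 3 → (A (k+1)) → ℤ) :
    ∑ g : Fin 3 → A (k+1), ∏ i, h i (g i) = ∏ i, (∑ x, h i x) := by
  rw [Finset.prod_univ_sum, Fintype.piFinset_univ]

lemma two_count_nofix (k : ℕ) (ε₀ : ℤˣ) :
    2 * ((Finset.univ.filter fun x : A (k+2) =>
        x ∈ E (k+2) ∧ ¬fixes (k+2) x ∧ Equiv.Perm.sign (sndHom (k+1) x) = ε₀).card : ℤ)
    = ∑ σ : Equiv.Perm (Fin 3), (if Equiv.Perm.sign σ = ε₀ then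
        (NFt k σ + ((Equiv.Perm.sign σ : ℤˣ) : ℤ) * NFe k σ) else 0) := by
  rw [← sum_ind (fun x : A (k+2) =>
    x ∈ E (k+2) ∧ ¬fixes (k+2) x ∧ Equiv.Perm.sign (sndHom (k+1) x) = ε₀)]
  set F := fun x : A (k+2) => if x ∈ E (k+2) ∧ ¬fixes (k+2) x ∧
      Equiv.Perm.sign (sndHom (k+1) x) = ε₀ then (1:ℤ) else 0 with hF
  have hsplit : ∑ x : A (k+2), F x = ∑ σ : Equiv.Perm (Fin 3), ∑ g : Fin 3 → A (k+1), F (g, σ) :=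
    Fintype.sum_prod_type_right
      (f := show (Fin 3 → A (k+1)) × Equiv.Perm (Fin 3) → ℤ from F)
  rw [hsplit, Finset.mul_sum]
  refine Finset.sum_congr rfl fun σ _ => ?_
  rw [Finset.mul_sum]
  have hpt : ∀ g : Fin 3 → A (k+1),
      2 * F (g, σ) = if Equiv.Perm.sign σ = ε₀ then
          (∏ i, (if σ i = i then wn k (g i) else wt k (g i))
            + ((Equiv.Perm.sign σ : ℤˣ) : ℤ) *
              ∏ i, (if σ i = i then wne k (g i) else we k (g i))) else 0 := by
    intro g
    by_cases hσ : Equiv.Perm.sign σ = ε₀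
    · rw [if_pos hσ, ← pointA k (Equiv.Perm.sign σ) g (fun i => σ i = i)]
      congr 1
      rw [hF]
      dsimp only
      congr 1
      apply propext
      constructor
      · rintro ⟨h1, h2, -⟩
        exact ⟨((mem_pair k g σ).mp h1).1, (nofix_pair k g σ).mp h2,
          ((mem_pair k g σ).mp h1).2⟩
      · rintro ⟨h1, h2, h3⟩
        exact ⟨(mem_pair k g σ).mpr ⟨h1, h3⟩, (nofix_pair k g σ).mpr h2,
          by rw [sndHom_pair]; exact hσ⟩
    · have h0 : F (g, σ) = 0 :=
        if_neg (fun h => hσ (by rw [← sndHom_pair k g σ]; exact h.2.2))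
      rw [if_neg hσ, h0]
      ring
  rw [Finset.sum_congr rfl fun g _ => hpt g, sum_if_const]
  by_cases hσ : Equiv.Perm.sign σ = ε₀
  · rw [if_pos hσ, if_pos hσ]
    have e1 : ∀ i : Fin 3, (∑ x, if σ i = i then wn k x else wt k x)
        = (if σ i = i then Sn k else St k) := fun i => by
      by_cases h : σ i = i <;> simp [h, Sn, St]
    have e2 : ∀ i : Fin 3, (∑ x, if σ i = i then wne k x else we k x)
        = (if σ i = i then Sne k else Se k) := fun i => by
      by_cases h : σ i = i <;> simp [h, Sne, Se]
    rw [Finset.sum_add_distrib, ← Finset.mul_sum, sum_prod_eval k (fun i x => if σ i = i then wn k x else wt k x),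
      sum_prod_eval k (fun i x => if σ i = i then wne k x else we k x)]
    unfold NFt NFe
    rw [Finset.prod_congr rfl (fun i _ => e1 i), Finset.prod_congr rfl (fun i _ => e2 i)]
  · rw [if_neg hσ, if_neg hσ]
lemma two_count_sgn (k : ℕ) (ε₀ : ℤˣ) :
    2 * ((Finset.univ.filter fun x : A (k+2) =>
        x ∈ E (k+2) ∧ Equiv.Perm.sign (sndHom (k+1) x) = ε₀).card : ℤ)
    = ∑ σ : Equiv.Perm (Fin 3), (if Equiv.Perm.sign σ = ε₀ then
        (St k ^ 3 + ((Equiv.Perm.sign σ : ℤˣ) : ℤ) * Se k ^ 3) else 0) := by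
  rw [← sum_ind (fun x : A (k+2) =>
    x ∈ E (k+2) ∧ Equiv.Perm.sign (sndHom (k+1) x) = ε₀)]
  set F := fun x : A (k+2) => if x ∈ E (k+2) ∧
      Equiv.Perm.sign (sndHom (k+1) x) = ε₀ then (1:ℤ) else 0 with hF
  have hsplit : ∑ x : A (k+2), F x = ∑ σ : Equiv.Perm (Fin 3), ∑ g : Fin 3 → A (k+1), F (g, σ) :=
    Fintype.sum_prod_type_right
      (f := show (Fin 3 → A (k+1)) × Equiv.Perm (Fin 3) → ℤ from F)
  rw [hsplit, Finset.mul_sum]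
  refine Finset.sum_congr rfl fun σ _ => ?_
  rw [Finset.mul_sum]
  have hpt : ∀ g : Fin 3 → A (k+1),
      2 * F (g, σ) = if Equiv.Perm.sign σ = ε₀ then
          (∏ i, (if (fun _ : Fin 3 => False) i then wn k (g i) else wt k (g i))
            + ((Equiv.Perm.sign σ : ℤˣ) : ℤ) *
              ∏ i, (if (fun _ : Fin 3 => False) i then wne k (g i) else we k (g i))) else 0 := by
    intro g
    by_cases hσ : Equiv.Perm.sign σ = ε₀
    · rw [if_pos hσ, ← pointA k (Equiv.Perm.sign σ) g (fun _ => False)]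
      congr 1
      rw [hF]
      dsimp only
      congr 1
      apply propext
      constructor
      · rintro ⟨h1, -⟩
        exact ⟨((mem_pair k g σ).mp h1).1, fun i h => absurd h id,
          ((mem_pair k g σ).mp h1).2⟩
      · rintro ⟨h1, -, h3⟩
        exact ⟨(mem_pair k g σ).mpr ⟨h1, h3⟩, by rw [sndHom_pair]; exact hσ⟩
    · have h0 : F (g, σ) = 0 :=
        if_neg (fun h => hσ (by rw [← sndHom_pair k g σ]; exact h.2))
      rw [if_neg hσ, h0]
      ring
  rw [Finset.sum_congr rfl fun g _ => hpt g, sum_if_const]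
  by_cases hσ : Equiv.Perm.sign σ = ε₀
  · rw [if_pos hσ, if_pos hσ]
    have e1 : ∀ i : Fin 3, (∑ x, if (fun _ : Fin 3 => False) i then wn k x else wt k x)
        = St k := fun i => by simp [St]
    have e2 : ∀ i : Fin 3, (∑ x, if (fun _ : Fin 3 => False) i then wne k x else we k x)
        = Se k := fun i => by simp [Se]
    rw [Finset.sum_add_distrib, ← Finset.mul_sum,
      sum_prod_eval k (fun i x => if (fun _ : Fin 3 => False) i then wn k x else wt k x),
      sum_prod_eval k (fun i x => if (fun _ : Fin 3 => False) i then wne k x else we k x),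
      Finset.prod_congr rfl (fun i _ => e1 i), Finset.prod_congr rfl (fun i _ => e2 i),
      Finset.prod_const, Finset.prod_const]
    simp
  · rw [if_neg hσ, if_neg hσ]
lemma perm3_univ : (Finset.univ : Finset (Equiv.Perm (Fin 3))) =
    {1, Equiv.swap 0 1, Equiv.swap 0 2, Equiv.swap 1 2, finRotate 3, (finRotate 3)⁻¹} := by
  decide

example : Equiv.Perm.sign (1 : Equiv.Perm (Fin 3)) = 1 := by decide
example : Equiv.Perm.sign (Equiv.swap (0:Fin 3) 1) = -1 := by decide
example : Equiv.Perm.sign (finRotate 3) = 1 := by decide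
example : ((finRotate 3) : Equiv.Perm (Fin 3)) 0 = 1 := by decide
lemma expand_perm3 (f : Equiv.Perm (Fin 3) → ℤ) :
    ∑ σ : Equiv.Perm (Fin 3), f σ =
      f 1 + f (Equiv.swap 0 1) + f (Equiv.swap 0 2) + f (Equiv.swap 1 2)
        + f (finRotate 3) + f (finRotate 3)⁻¹ := by
  rw [perm3_univ, Finset.sum_insert (by decide), Finset.sum_insert (by decide),
    Finset.sum_insert (by decide), Finset.sum_insert (by decide),
    Finset.sum_insert (by decide), Finset.sum_singleton]
  ring

lemma s1one : Equiv.Perm.sign (1 : Equiv.Perm (Fin 3)) = 1 := by decide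
lemma s01 : Equiv.Perm.sign (Equiv.swap (0:Fin 3) 1) = -1 := by decide
lemma s02 : Equiv.Perm.sign (Equiv.swap (0:Fin 3) 2) = -1 := by decide
lemma s12 : Equiv.Perm.sign (Equiv.swap (1:Fin 3) 2) = -1 := by decide
lemma srot : Equiv.Perm.sign (finRotate 3) = 1 := by decide
lemma sroti : Equiv.Perm.sign ((finRotate 3)⁻¹ : Equiv.Perm (Fin 3)) = 1 := by decide

lemma pC_rec (k : ℕ) : 2 * (pC (k+1) : ℤ) = 3 * (St k ^ 3 + Se k ^ 3) := by
  have h : 2 * (pC (k+1) : ℤ) = _ := two_count_sgn k 1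
  rw [expand_perm3] at h
  rw [h]
  simp (config := { decide := true }) only [s1one, s01, s02, s12, srot, sroti, Units.val_one, Units.val_neg, if_true, if_false]
  ring

lemma mC_rec (k : ℕ) : 2 * (mC (k+1) : ℤ) = 3 * (St k ^ 3 - Se k ^ 3) := by
  have h : 2 * (mC (k+1) : ℤ) = _ := two_count_sgn k (-1)
  rw [expand_perm3] at h
  rw [h]
  simp (config := { decide := true }) only [s1one, s01, s02, s12, srot, sroti, Units.val_one, Units.val_neg, if_true, if_false]
  ring

lemma cC_rec (k : ℕ) : 2 * (cC (k+1) : ℤ) =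
    Sn k ^ 3 + Sne k ^ 3 + 2 * (St k ^ 3 + Se k ^ 3) := by
  have h : 2 * (cC (k+1) : ℤ) = _ := two_count_nofix k 1
  rw [expand_perm3] at h
  rw [h]
  simp (config := { decide := true }) only [NFt, NFe, Fin.prod_univ_three, s1one, s01, s02, s12, srot, sroti, Units.val_one, Units.val_neg, if_true, if_false]
  ring

lemma dC_rec (k : ℕ) : 2 * (dC (k+1) : ℤ) =
    3 * (Sn k * St k ^ 2 - Sne k * Se k ^ 2) := by
  have h : 2 * (dC (k+1) : ℤ) = _ := two_count_nofix k (-1)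
  rw [expand_perm3] at h
  rw [h]
  simp (config := { decide := true }) only [NFt, NFe, Fin.prod_univ_three, s1one, s01, s02, s12, srot, sroti, Units.val_one, Units.val_neg, if_true, if_false]
  ring
lemma base_vals : aC 0 = 1 ∧ bC 0 = 3 ∧ cC 0 = 2 ∧ dC 0 = 0 := by
  refine ⟨?_, ?_, ?_, ?_⟩ <;> decide

lemma inv_pm : ∀ k, pC k = mC k := by
  intro k
  induction k with
  | zero => decide
  | succ k ih =>
    have hSe : Se k = 0 := by
      rw [Se_eq]
      have h1 : (pC k : ℤ) = mC k := by exact_mod_cast ih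
      rw [pC_eq, mC_eq] at h1
      push_cast at h1 ⊢
      linarith
    have h1 := pC_rec k
    have h2 := mC_rec k
    rw [hSe] at h1 h2
    have : (pC (k+1) : ℤ) = mC (k+1) := by linarith
    exact_mod_cast this

lemma Se_zero (k : ℕ) : Se k = 0 := by
  rw [Se_eq]
  have h1 : (pC k : ℤ) = mC k := by exact_mod_cast inv_pm k
  rw [pC_eq, mC_eq] at h1
  push_cast at h1 ⊢
  linarith

lemma aC_pos (k : ℕ) : 1 ≤ aC k := by
  rw [Nat.one_le_iff_ne_zero, ← Nat.pos_iff_ne_zero, aC, Finset.card_pos]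
  refine ⟨1, Finset.mem_filter.mpr ⟨Finset.mem_univ _, Subgroup.one_mem _, ⟨take 0 (k+1) PUnit.unit, by rw [map_one]; rfl⟩, by rw [map_one, map_one]⟩⟩

lemma xprop_eq (k : ℕ) : xprop (k+1) = ((aC k : ℝ) + bC k) / (2 * pC k) := by
  have hnum : Nat.card {s : A (k+1) // s ∈ E (k+1) ∧ ∃ l : L (k+1), toPerm (k+1) s l = l}
      = fC k := by
    rw [Nat.card_eq_fintype_card, Fintype.card_subtype]
    rfl
  have hden : Nat.card (E (k+1)) = tC k := by
    rw [Nat.card_eq_fintype_card, Fintype.card_subtype]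
    rfl
  rw [xprop, hnum, hden, fC_eq, tC_eq, ← inv_pm k]
  push_cast
  ring_nf
lemma intcast_eq {u v : ℤ} (h : u = v) : (u : ℝ) = (v : ℝ) := by exact_mod_cast h

set_option maxHeartbeats 1000000 in
lemma sandwich (k : ℕ) :
    xprop (k+1) - xprop (k+1)^2/2 ≤ xprop (k+2) ∧
      xprop (k+2) ≤ xprop (k+1) - xprop (k+1)^2/2 + xprop (k+1)^3/3 := by
  have hacZ : (pC k : ℝ) = (aC k : ℝ) + cC k := by exact_mod_cast pC_eq k
  have hbdZ : (pC k : ℝ) = (bC k : ℝ) + dC k := by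
    rw [inv_pm k]; exact_mod_cast mC_eq k
  have ha1 : (1:ℝ) ≤ aC k := by exact_mod_cast aC_pos k
  have hb0 : (0:ℝ) ≤ bC k := Nat.cast_nonneg _
  have hc0 : (0:ℝ) ≤ cC k := Nat.cast_nonneg _
  have hd0 : (0:ℝ) ≤ dC k := Nat.cast_nonneg _
  have hSt : ((St k : ℤ) : ℝ) = 2 * (pC k : ℝ) := by
    have := intcast_eq (St_eq k); push_cast at this ⊢; linarith
  have hSn : ((Sn k : ℤ) : ℝ) = 2 * (pC k : ℝ) - ((aC k : ℝ) + bC k) := by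
    have := intcast_eq (Sn_eq k); push_cast at this ⊢; linarith
  have hSne : ((Sne k : ℤ) : ℝ) = (bC k : ℝ) - aC k := by
    have := intcast_eq (Sne_eq k); push_cast at this ⊢; linarith
  have hSe : ((Se k : ℤ) : ℝ) = 0 := by rw [Se_zero k]; norm_num
  have h2p : 2 * ((pC (k+1) : ℝ)) = 3 * ((2*(pC k : ℝ))^3 + 0^3) := by
    have := intcast_eq (pC_rec k); push_cast at this; rw [hSt, hSe] at this
    linarith
  have h2m : 2 * ((mC (k+1) : ℝ)) = 3 * ((2*(pC k : ℝ))^3 - 0^3) := by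
    have := intcast_eq (mC_rec k); push_cast at this; rw [hSt, hSe] at this
    linarith
  have h2c : 2 * ((cC (k+1) : ℝ)) =
      (2*(pC k : ℝ) - ((aC k : ℝ) + bC k))^3 + ((bC k : ℝ) - aC k)^3
        + 2*((2*(pC k : ℝ))^3 + 0^3) := by
    have := intcast_eq (cC_rec k); push_cast at this; rw [hSt, hSe, hSn, hSne] at this
    linarith
  have h2d : 2 * ((dC (k+1) : ℝ)) =
      3 * ((2*(pC k : ℝ) - ((aC k : ℝ) + bC k)) * (2*(pC k : ℝ))^2
        - ((bC k : ℝ) - aC k) * 0^2) := by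
    have := intcast_eq (dC_rec k); push_cast at this; rw [hSt, hSe, hSn, hSne] at this
    linarith
  have ha'Z : (pC (k+1) : ℝ) = (aC (k+1) : ℝ) + cC (k+1) := by exact_mod_cast pC_eq (k+1)
  have hb'Z : (mC (k+1) : ℝ) = (bC (k+1) : ℝ) + dC (k+1) := by exact_mod_cast mC_eq (k+1)
  have hxv : xprop (k+1) = ((aC k : ℝ) + bC k) / (2 * (pC k : ℝ)) := xprop_eq k
  have hx' : xprop (k+2) = ((aC (k+1) : ℝ) + bC (k+1)) / (2 * (pC (k+1) : ℝ)) := xprop_eq (k+1)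
  set s : ℝ := (pC k : ℝ) with hs_def
  set a : ℝ := (aC k : ℝ) with ha_def
  set b : ℝ := (bC k : ℝ) with hb_def
  set c : ℝ := (cC k : ℝ) with hc_def
  set d : ℝ := (dC k : ℝ) with hd_def
  set A' : ℝ := (aC (k+1) : ℝ) with hA_def
  set B' : ℝ := (bC (k+1) : ℝ) with hB_def
  set C' : ℝ := (cC (k+1) : ℝ) with hC_def
  set D' : ℝ := (dC (k+1) : ℝ) with hD_def
  set P' : ℝ := (pC (k+1) : ℝ) with hP_def
  set M' : ℝ := (mC (k+1) : ℝ) with hM_def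
  clear_value s a b c d A' B' C' D' P' M'
  have hs1 : (1:ℝ) ≤ s := by linarith
  have hs0 : (0:ℝ) < s := by linarith
  have hsne : s ≠ 0 := ne_of_gt hs0
  have hnum' : A' + B' =
      (32*s^3 - (2*s - (a+b))^3 - (b-a)^3 - 12*s^2*(2*s - (a+b)))/2 := by
    linear_combination (h2p + h2m - h2c - h2d)/2 - ha'Z - hb'Z
  have hp' : P' = 12*s^3 := by linear_combination h2p/2
  rw [hnum', hp'] at hx'
  clear hacZ hbdZ hc0 hd0 hSt hSn hSne hSe h2p h2m h2c h2d ha'Z hb'Z hnum' hp'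
  constructor
  · have hdiff : xprop (k+2) - (xprop (k+1) - xprop (k+1)^2/2)
        = (2*a^3 + 6*a*b^2)/(48*s^3) := by
      rw [hx', hxv]
      field_simp
      ring
    have hpos : (0:ℝ) ≤ (2*a^3 + 6*a*b^2)/(48*s^3) := by
      apply div_nonneg _ (by positivity)
      have h0a : (0:ℝ) ≤ a := by linarith
      nlinarith [mul_nonneg (mul_nonneg h0a h0a) h0a, mul_nonneg (mul_nonneg h0a hb0) hb0]
    linarith
  · have hdiff : (xprop (k+1) - xprop (k+1)^2/2 + xprop (k+1)^3/3) - xprop (k+2)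
        = (2*b^3 + 6*a^2*b)/(48*s^3) := by
      rw [hx', hxv]
      field_simp
      ring
    have hpos : (0:ℝ) ≤ (2*b^3 + 6*a^2*b)/(48*s^3) := by
      apply div_nonneg _ (by positivity)
      have h0a : (0:ℝ) ≤ a := by linarith
      nlinarith [mul_nonneg (mul_nonneg hb0 hb0) hb0, mul_nonneg (mul_nonneg h0a h0a) hb0]
    linarith
lemma x_pos (k : ℕ) : 0 < xprop (k+1) := by
  rw [xprop_eq k]
  have ha1 : (1:ℝ) ≤ aC k := by exact_mod_cast aC_pos k
  have hb0 : (0:ℝ) ≤ bC k := Nat.cast_nonneg _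
  have hc0 : (0:ℝ) ≤ cC k := Nat.cast_nonneg _
  have hp : (pC k : ℝ) = (aC k : ℝ) + cC k := by exact_mod_cast pC_eq k
  apply div_pos <;> linarith

lemma x_one : xprop 1 = 2/3 := by
  have h := xprop_eq 0
  have h1 : aC 0 = 1 := base_vals.1
  have h2 : bC 0 = 3 := base_vals.2.1
  have h3 : cC 0 = 2 := base_vals.2.2.1
  have h4 : pC 0 = 3 := by rw [pC_eq 0, h1, h3]
  rw [h, h1, h2, h4]
  norm_num

lemma x_le (k : ℕ) : xprop (k+1) ≤ 2/3 := by
  induction k with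
  | zero => rw [x_one]
  | succ k ih =>
    have h := (sandwich k).2
    have hx0 := x_pos k
    nlinarith [sq_nonneg (xprop (k+1)), mul_pos hx0 hx0]

lemma ystep_up (k : ℕ) :
    1/xprop (k+2) ≤ 1/xprop (k+1) + 1/2 + (3/8)*xprop (k+1) := by
  have hx0 := x_pos k
  have hx23 := x_le k
  have hx'0 := x_pos (k+1)
  have hlow := (sandwich k).1
  set x := xprop (k+1)
  set x' := xprop (k+2)
  have hR : (0:ℝ) < 1/x + 1/2 + (3/8)*x := by positivity
  rw [div_le_iff₀ hx'0]
  have h2 : (1/x)*(x - x^2/2) = 1 - x/2 := by field_simp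
  have key : 1 ≤ (1/x + 1/2 + (3/8)*x)*(x - x^2/2) := by
    have hexp : (1/x + 1/2 + (3/8)*x)*(x - x^2/2)
        = (1 - x/2) + (1/2 + (3/8)*x)*(x - x^2/2) := by
      rw [← h2]; ring
    rw [hexp]
    nlinarith [mul_nonneg (mul_nonneg hx0.le hx0.le) (by linarith : (0:ℝ) ≤ 2 - 3*x)]
  calc (1:ℝ) ≤ (1/x + 1/2 + (3/8)*x)*(x - x^2/2) := key
    _ ≤ (1/x + 1/2 + (3/8)*x)*x' := by
        apply mul_le_mul_of_nonneg_left _ hR.le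
        linarith
    _ = _ := by ring

lemma ystep_down (k : ℕ) :
    1/xprop (k+1) + 1/2 - (3/8)*xprop (k+1) ≤ 1/xprop (k+2) := by
  have hx0 := x_pos k
  have hx23 := x_le k
  have hx'0 := x_pos (k+1)
  have hup := (sandwich k).2
  set x := xprop (k+1)
  set x' := xprop (k+2)
  have hxinv : (3:ℝ)/2 ≤ 1/x := by
    rw [le_div_iff₀ hx0]; linarith
  have hR : (0:ℝ) ≤ 1/x + 1/2 - (3/8)*x := by linarith
  rw [le_div_iff₀ hx'0]
  have h3 : (1/x)*(x - x^2/2 + x^3/3) = 1 - x/2 + x^2/3 := by field_simp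
  have key : (1/x + 1/2 - (3/8)*x)*(x - x^2/2 + x^3/3) ≤ 1 := by
    have hexp : (1/x + 1/2 - (3/8)*x)*(x - x^2/2 + x^3/3)
        = (1 - x/2 + x^2/3) + (1/2 - (3/8)*x)*(x - x^2/2 + x^3/3) := by
      rw [← h3]; ring
    rw [hexp]
    nlinarith [mul_nonneg (mul_nonneg hx0.le hx0.le) (by linarith : (0:ℝ) ≤ 2 - 3*x),
      mul_nonneg (mul_nonneg (mul_nonneg hx0.le hx0.le) hx0.le) hx0.le,
      sq_nonneg (x*x)]
  calc (1/x + 1/2 - (3/8)*x)*x'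
      ≤ (1/x + 1/2 - (3/8)*x)*(x - x^2/2 + x^3/3) := by
        apply mul_le_mul_of_nonneg_left _ hR
        linarith
    _ ≤ 1 := key

lemma ylb (k : ℕ) : ((k:ℝ)+6)/4 ≤ 1/xprop (k+1) := by
  induction k with
  | zero => rw [x_one]; norm_num
  | succ k ih =>
    have h := ystep_down k
    have hx23 := x_le k
    push_cast
    push_cast at ih
    linarith

lemma x_small (k : ℕ) : xprop (k+1) ≤ 4/((k:ℝ)+2) := by
  have h := ylb k
  have hx0 := x_pos k
  have hk2 : (0:ℝ) < ((k:ℝ)+2)/4 := by positivity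
  have h2 : ((k:ℝ)+2)/4 ≤ 1/xprop (k+1) := by linarith
  have := one_div_le_one_div_of_le hk2 h2
  rw [one_div_one_div] at this
  calc xprop (k+1) ≤ 1/(((k:ℝ)+2)/4) := this
    _ = 4/((k:ℝ)+2) := by rw [one_div_div]

lemma log_step (k : ℕ) :
    (1:ℝ)/((k:ℝ)+2) ≤ Real.log ((k:ℝ)+2) - Real.log ((k:ℝ)+1) := by
  have h1 : (0:ℝ) < (k:ℝ)+1 := by positivity
  have h2 : (0:ℝ) < (k:ℝ)+2 := by positivity
  have h := Real.log_le_sub_one_of_pos (show (0:ℝ) < ((k:ℝ)+1)/((k:ℝ)+2) by positivity)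
  rw [Real.log_div (ne_of_gt h1) (ne_of_gt h2)] at h
  have heq : ((k:ℝ)+1)/((k:ℝ)+2) - 1 = -(1/((k:ℝ)+2)) := by
    field_simp
    norm_num
  linarith

lemma yub (k : ℕ) : 1/xprop (k+1) ≤ ((k:ℝ)+1)/2 + 1 + (3/2)*Real.log ((k:ℝ)+1) := by
  induction k with
  | zero => rw [x_one]; norm_num [Real.log_one]
  | succ k ih =>
    have h := ystep_up k
    have hxs := x_small k
    have hls := log_step k
    have hx0 := x_pos k
    have hk2 : (0:ℝ) < (k:ℝ)+2 := by positivity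
    have h38 : (3/8)*xprop (k+1) ≤ (3/2)*(1/((k:ℝ)+2)) := by
      rw [mul_one_div]
      calc (3/8)*xprop (k+1) ≤ (3/8)*(4/((k:ℝ)+2)) := by
            apply mul_le_mul_of_nonneg_left hxs (by norm_num)
        _ = (3/2)/((k:ℝ)+2) := by ring
    push_cast
    push_cast at ih
    rw [show ((k:ℝ)+1+1) = (k:ℝ)+2 by ring]
    nlinarith [hls]

lemma ylb2 (k : ℕ) :
    ((k:ℝ)+1)/2 + 1 - (3/2)*Real.log ((k:ℝ)+1) ≤ 1/xprop (k+1) := by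
  induction k with
  | zero => rw [x_one]; norm_num [Real.log_one]
  | succ k ih =>
    have h := ystep_down k
    have hxs := x_small k
    have hls := log_step k
    have hx0 := x_pos k
    have hk2 : (0:ℝ) < (k:ℝ)+2 := by positivity
    have h38 : (3/8)*xprop (k+1) ≤ (3/2)*(1/((k:ℝ)+2)) := by
      rw [mul_one_div]
      calc (3/8)*xprop (k+1) ≤ (3/8)*(4/((k:ℝ)+2)) := by
            apply mul_le_mul_of_nonneg_left hxs (by norm_num)
        _ = (3/2)/((k:ℝ)+2) := by ring
    push_cast
    push_cast at ih
    rw [show ((k:ℝ)+1+1) = (k:ℝ)+2 by ring]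
    nlinarith [hls]
lemma x_nonneg (n : ℕ) : 0 ≤ xprop n := by
  unfold xprop
  positivity

theorem fixed_leaf_proportion' :
    (∀ n : ℕ, 1 ≤ n →
      xprop n - (xprop n) ^ 2 / 2 ≤ xprop (n+1) ∧
      xprop (n+1) ≤ xprop n - (xprop n) ^ 2 / 2 + (xprop n) ^ 3 / 3) ∧
    (∃ C : ℝ, ∀ n : ℕ, 2 ≤ n →
      |xprop n - 2 / (n : ℝ)| ≤ C * Real.log n / (n : ℝ) ^ 2) ∧
    Filter.Tendsto xprop Filter.atTop (nhds 0) := by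
  refine ⟨?_, ⟨30, ?_⟩, ?_⟩
  · intro n hn
    obtain ⟨k, rfl⟩ : ∃ k, n = k+1 := ⟨n-1, by omega⟩
    have h := sandwich k
    constructor
    · have := h.1
      rw [show xprop (k+1) - xprop (k+1)^2/2 = xprop (k+1) - xprop (k+1)^2/2 from rfl] at this
      exact this
    · exact h.2
  · intro n hn
    obtain ⟨k, rfl⟩ : ∃ k, n = k+1 := ⟨n-1, by omega⟩
    have hk1 : 1 ≤ k := by omega
    have hx0 := x_pos k
    have hylb := ylb k
    have hyub := yub k
    have hylb2 := ylb2 k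
    set N : ℝ := (k:ℝ) + 1 with hN_def
    have hN2 : (2:ℝ) ≤ N := by
      rw [hN_def]
      have : (1:ℝ) ≤ (k:ℝ) := by exact_mod_cast hk1
      linarith
    have hN0 : (0:ℝ) < N := by linarith
    set y : ℝ := 1/xprop (k+1) with hy_def
    have hy0 : (0:ℝ) < y := by positivity
    have hxy : xprop (k+1) = 1/y := by rw [hy_def, one_div_one_div]
    have hyN : N/4 ≤ y := by
      have : ((k:ℝ)+6)/4 ≤ y := hylb
      rw [hN_def]; linarith
    have hL49 : (4:ℝ)/9 ≤ Real.log N := by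
      have h2 : Real.log 2 ≤ Real.log N := Real.log_le_log (by norm_num) hN2
      have := Real.log_two_gt_d9
      linarith
    have hL0 : (0:ℝ) < Real.log N := by linarith
    have hcast : ((k+1 : ℕ) : ℝ) = N := by rw [hN_def]; push_cast; ring
    rw [hcast, hxy]
    have hnum : |N - 2*y| ≤ 3*Real.log N + 2 := by
      rw [abs_le]
      constructor
      · have : y ≤ N/2 + 1 + (3/2)*Real.log N := by
          have := hyub; rw [hN_def] at *; linarith
        linarith
      · have : N/2 + 1 - (3/2)*Real.log N ≤ y := by
          have := hylb2; rw [hN_def] at *; linarith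
        linarith
    have hyN0 : (0:ℝ) < y*N := by positivity
    have key : 1/y - 2/N = (N - 2*y)/(y*N) := by
      field_simp
    rw [key, abs_div, abs_of_pos hyN0]
    have hNN : N^2/4 ≤ y*N := by
      calc N^2/4 = (N/4)*N := by ring
        _ ≤ y*N := by apply mul_le_mul_of_nonneg_right hyN hN0.le
    calc |N - 2*y|/(y*N)
        ≤ (3*Real.log N + 2)/(N^2/4) := div_le_div₀ (by linarith) hnum (by positivity) hNN
      _ = (3*Real.log N + 2)*4/N^2 := by rw [div_div_eq_mul_div]
      _ ≤ 30*Real.log N/N^2 := by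
          rw [div_le_div_iff₀ (by positivity) (by positivity)]
          nlinarith [mul_nonneg (by linarith : (0:ℝ) ≤ 18*Real.log N - 8) (sq_nonneg N)]
  · apply squeeze_zero' (g := fun n : ℕ => 4/(n:ℝ))
    · filter_upwards with n using x_nonneg n
    · rw [Filter.eventually_atTop]
      refine ⟨1, fun n hn => ?_⟩
      obtain ⟨k, rfl⟩ : ∃ k, n = k+1 := ⟨n-1, by omega⟩
      have h := x_small k
      have : (4:ℝ)/((k:ℝ)+2) ≤ 4/((k:ℝ)+1) := by
        apply div_le_div_of_nonneg_left (by norm_num) (by positivity) (by linarith)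
      push_cast
      linarith
    · exact tendsto_const_div_atTop_nhds_zero_nat 4

/-- `ρ(x_n) ≤ x_{n+1} ≤ φ(x_n)` for all `n ≥ 1`, where `ρ(t) = t - t²/2`
and `φ(t) = t - t²/2 + t³/3`; consequently `x_n = (2/n)(1 + O(log n/n))`, and in
particular the proportion of elements of `E_n` fixing a leaf tends to `0`. -/
theorem fixed_leaf_proportion :
    (∀ n : ℕ, 1 ≤ n →
      xprop n - (xprop n) ^ 2 / 2 ≤ xprop (n+1) ∧
      xprop (n+1) ≤ xprop n - (xprop n) ^ 2 / 2 + (xprop n) ^ 3 / 3) ∧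
    (∃ C : ℝ, ∀ n : ℕ, 2 ≤ n →
      |xprop n - 2 / (n : ℝ)| ≤ C * Real.log n / (n : ℝ) ^ 2) ∧
    Filter.Tendsto xprop Filter.atTop (nhds 0) := by
  exact fixed_leaf_proportion'
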